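/- Let r ≥ 3, A ∈ 𝒯_r and e_0 ∈ E(A). For all 1 ≤ i < j ≤ r, the polynomial (z_i − z_j) ∘ Φ_A in the variables (z_A, x_A, (ζ_e)_{e∈E(A)}) is nonzero, and its ζ_{e_0}-adic order equals 1 if both i and j belong to Leaf(e_0), and equals 0 otherwise. -/

import Mathlib

noncomputable section

/-- A plane (rooted) binary tree with leaves labeled by elements of `Fin r`. -/
inductive PTree (r : ℕ) : Type
  | leaf : Fin r → PTree r
  | node : PTree r → PTree r → PTree r

namespace PTree

variable {r : ℕ}

/-- The labels of the leaves of the tree, listed from left to right. -/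
def leafLabels : PTree r → List (Fin r)
  | .leaf i => [i]
  | .node l t => l.leafLabels ++ t.leafLabels

/-- `A ∈ 𝒯_r`: the `r` leaves of `A` are labeled bijectively by `Fin r`. -/
def IsTree (A : PTree r) : Prop :=
  A.leafLabels.Nodup ∧ A.leafLabels.length = r

/-- The label of the rightmost leaf of the tree. -/
def rightmost : PTree r → Fin r
  | .leaf i => i
  | .node _ t => t.rightmost

/-- The subtree of a tree at the address `p` (`false` = go to the left child,
`true` = go to the right child), if the address is valid. -/
def subtreeAt : PTree r → List Bool → Option (PTree r)
  | t, [] => some t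
  | .leaf _, _ :: _ => none
  | .node l t, b :: p => (if b then t else l).subtreeAt p

/-- `p` is the address of an internal (non-leaf) vertex of `A`; the set of such
addresses is `V(A)`. -/
def IsVertex (A : PTree r) (p : List Bool) : Prop :=
  ∃ l t : PTree r, A.subtreeAt p = some (.node l t)

/-- `p` is the address of the lower endpoint `d(e)` of an internal edge `e` of
`A` (an edge not adjacent to a leaf); the upper endpoint `u(e)` is at the
address `p.dropLast`.  The set of such addresses is `E(A)`. -/
def IsEdge (A : PTree r) (p : List Bool) : Prop :=
  p ≠ [] ∧ A.IsVertex p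

/-- The type `E(A)` of internal edges of `A`. -/
abbrev Edge (A : PTree r) : Type := {p : List Bool // A.IsEdge p}

/-- `x_v = z_{L(v)} − z_{R(v)}` for the internal vertex `v` given as the
subtree rooted at it (junk value `0` at leaves). -/
def xval (z : Fin r → ℂ) : PTree r → ℂ
  | .leaf _ => 0
  | .node l t => z l.rightmost - z t.rightmost

/-- The coordinate `x_v` for the vertex `v` of `A` with address `p`. -/
def xAt (A : PTree r) (z : Fin r → ℂ) (p : List Bool) : ℂ :=
  match A.subtreeAt p with
  | some t => xval z t
  | none => 0

/-- The coordinate `ζ_e = x_{d(e)} / x_{u(e)}` for the edge of `A` whose lower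
endpoint has address `p` (its upper endpoint has address `p.dropLast`). -/
def zetaAt (A : PTree r) (z : Fin r → ℂ) (p : List Bool) : ℂ :=
  xAt A z p / xAt A z p.dropLast

/-- `Leaf(e)`: the labels of the leaves descending from the vertex of `A` with
address `p`. -/
def leavesAt (A : PTree r) (p : List Bool) : List (Fin r) :=
  ((A.subtreeAt p).map leafLabels).getD []

/-- The label of the rightmost leaf descending from the vertex of `A` with
address `p`. -/
def rightmostAt (A : PTree r) (p : List Bool) : Option (Fin r) :=
  (A.subtreeAt p).map rightmost

end PTree

/-- The configuration space `X_r = {(z_1,…,z_r) ∈ ℂ^r : z_i ≠ z_j for i ≠ j}`. -/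
def ConfigSpace (r : ℕ) : Set (Fin r → ℂ) :=
  {z | ∀ i j : Fin r, i ≠ j → z i ≠ z j}

namespace PTree

variable {r : ℕ}

/-- The `A`-coordinate map `Ψ_A = (z_A, x_A, (ζ_e)_{e ∈ E(A)})`, where
`z_A = z_{r_A}` (`r_A` the rightmost leaf of `A`) and `x_A = x_{t_A}` (`t_A`
the root of `A`). -/
def psi (A : PTree r) (z : Fin r → ℂ) : ℂ × ℂ × (A.Edge → ℂ) :=
  (z A.rightmost, xval z A, fun e => A.zetaAt z e.1)

/-- The variable index type for the polynomial ring
`ℂ[z_A, x_A, ζ_e (e ∈ E(A))]`. -/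
abbrev Idx (A : PTree r) : Type := Unit ⊕ Unit ⊕ A.Edge

/-- The point of `ℂ^{Idx A}` corresponding to `w = (z_A, x_A, (ζ_e)_e)`. -/
def assign (A : PTree r) (w : ℂ × ℂ × (A.Edge → ℂ)) : A.Idx → ℂ :=
  Sum.elim (fun _ => w.1) (Sum.elim (fun _ => w.2.1) fun e => w.2.2 e)

/-- The polynomial map `Φ_A : ℂ × ℂ × ℂ^{E(A)} → ℂ^r` determined by a family
of polynomials `P`. -/
def phiMap (A : PTree r) (P : Fin r → MvPolynomial A.Idx ℂ)
    (w : ℂ × ℂ × (A.Edge → ℂ)) : Fin r → ℂ :=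
  fun i => MvPolynomial.eval (A.assign w) (P i)

/-- `Φ_A ∘ Ψ_A = id` on `X_r`. -/
def PhiPsiId (A : PTree r) (P : Fin r → MvPolynomial A.Idx ℂ) : Prop :=
  ∀ z ∈ ConfigSpace r, A.phiMap P (A.psi z) = z

/-- `Ψ_A ∘ Φ_A = id` on `ℂ × ℂ^× × (ℂ^×)^{E(A)}`. -/
def PsiPhiId (A : PTree r) (P : Fin r → MvPolynomial A.Idx ℂ) : Prop :=
  ∀ w : ℂ × ℂ × (A.Edge → ℂ), w.2.1 ≠ 0 → (∀ e, w.2.2 e ≠ 0) →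
    A.psi (A.phiMap P w) = w

end PTree

namespace PTree

open MvPolynomial

variable {r : ℕ}

theorem subtreeAt_append (A : PTree r) (p q : List Bool) :
    A.subtreeAt (p ++ q) = (A.subtreeAt p).bind (fun t => t.subtreeAt q) := by
  induction p generalizing A with
  | nil => simp [subtreeAt]
  | cons b p ih =>
    cases A with
    | leaf i => simp [subtreeAt]
    | node l t => simpa only [List.cons_append, subtreeAt] using ih _

theorem exists_addr_of_mem {t : PTree r} {i : Fin r} (h : i ∈ t.leafLabels) :
    ∃ p, t.subtreeAt p = some (.leaf i) := by
  induction t with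
  | leaf j =>
    simp only [leafLabels, List.mem_singleton] at h
    exact ⟨[], by simp [subtreeAt, h]⟩
  | node l t ihl iht =>
    rcases List.mem_append.1 h with h | h
    · obtain ⟨p, hp⟩ := ihl h; exact ⟨false :: p, by simpa [subtreeAt] using hp⟩
    · obtain ⟨p, hp⟩ := iht h; exact ⟨true :: p, by simpa [subtreeAt] using hp⟩

theorem labels_subtree {t s : PTree r} {p : List Bool} (h : t.subtreeAt p = some s) :
    s.leafLabels ⊆ t.leafLabels := by
  induction p generalizing t with
  | nil =>
    simp only [subtreeAt, Option.some.injEq] at h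
    subst h; exact fun x hx => hx
  | cons b p ih =>
    cases t with
    | leaf i => simp [subtreeAt] at h
    | node l t =>
      simp only [subtreeAt] at h
      cases b
      · exact fun x hx => List.mem_append.2 (Or.inl (ih (by simpa using h) hx))
      · exact fun x hx => List.mem_append.2 (Or.inr (ih (by simpa using h) hx))

theorem addr_unique {t : PTree r} (hn : t.leafLabels.Nodup) {p p' : List Bool} {i : Fin r}
    (h1 : t.subtreeAt p = some (.leaf i)) (h2 : t.subtreeAt p' = some (.leaf i)) : p = p' := by
  induction t generalizing p p' with
  | leaf j =>
    cases p with
    | nil =>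
      cases p' with
      | nil => rfl
      | cons b q => simp [subtreeAt] at h2
    | cons b q => simp [subtreeAt] at h1
  | node l t ihl iht =>
    simp only [leafLabels] at hn
    have hd := List.disjoint_of_nodup_append hn
    cases p with
    | nil => simp [subtreeAt] at h1
    | cons b q =>
      cases p' with
      | nil => simp [subtreeAt] at h2
      | cons b' q' =>
        simp only [subtreeAt] at h1 h2
        have hil : ∀ {q₀ : List Bool}, l.subtreeAt q₀ = some (.leaf i) → i ∈ l.leafLabels :=
          fun h => labels_subtree h (by simp [leafLabels])
        have hit : ∀ {q₀ : List Bool}, t.subtreeAt q₀ = some (.leaf i) → i ∈ t.leafLabels :=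
          fun h => labels_subtree h (by simp [leafLabels])
        cases b <;> cases b' <;> simp only [if_true, if_false, Bool.false_eq_true] at h1 h2 ⊢
        · rw [ihl hn.of_append_left h1 h2]
        · exact absurd (hit h2) (hd (hil h1))
        · exact absurd (hit h1) (hd (hil h2))
        · rw [iht hn.of_append_right h1 h2]

theorem mem_all {A : PTree r} (hA : A.IsTree) (i : Fin r) : i ∈ A.leafLabels := by
  have h1 : A.leafLabels.toFinset.card = r := by
    rw [List.toFinset_card_of_nodup hA.1, hA.2]
  have h2 : A.leafLabels.toFinset = Finset.univ :=
    Finset.eq_univ_of_card _ (by simp [h1])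
  have h3 := Finset.mem_univ i
  rw [← h2, List.mem_toFinset] at h3
  exact h3

theorem isVertex_of_prefix {A : PTree r} {p q : List Bool} {t : PTree r}
    (h : A.subtreeAt p = some t) (hq : q <+: p) (hne : q ≠ p) : A.IsVertex q := by
  obtain ⟨s, rfl⟩ := hq
  rw [subtreeAt_append] at h
  cases hs : A.subtreeAt q with
  | none => rw [hs] at h; simp at h
  | some u =>
    rw [hs] at h
    cases s with
    | nil => exact absurd (List.append_nil q).symm hne
    | cons b s' =>
      cases u with
      | leaf j => simp [subtreeAt] at h
      | node l t' => exact ⟨l, t', hs⟩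

/-- longest common prefix -/
def lcp : List Bool → List Bool → List Bool
  | [], _ => []
  | _ :: _, [] => []
  | a :: p, b :: q => if a = b then a :: lcp p q else []

theorem lcp_prefix_left : ∀ p q : List Bool, lcp p q <+: p
  | [], _ => List.nil_prefix
  | _ :: _, [] => List.nil_prefix
  | a :: p, b :: q => by
    by_cases h : a = b
    · simpa [lcp, h] using (lcp_prefix_left p q)
    · simp [lcp, h]

theorem lcp_prefix_right : ∀ p q : List Bool, lcp p q <+: q
  | [], _ => List.nil_prefix
  | _ :: _, [] => List.nil_prefix
  | a :: p, b :: q => by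
    by_cases h : a = b
    · subst h; simpa [lcp] using (lcp_prefix_right p q)
    · simp [lcp, h]

theorem prefix_lcp : ∀ {c p q : List Bool}, c <+: p → c <+: q → c <+: lcp p q
  | [], _, _, _, _ => List.nil_prefix
  | x :: c, p, q, hp, hq => by
    cases p with
    | nil => exact absurd (hp.length_le) (by simp)
    | cons a p' =>
      cases q with
      | nil => exact absurd (hq.length_le) (by simp)
      | cons b q' =>
        rw [List.cons_prefix_cons] at hp hq
        obtain ⟨rfl, hp⟩ := hp
        obtain ⟨rfl, hq⟩ := hq
        simpa only [lcp, eq_self_iff_true, if_true, List.cons_prefix_cons, true_and]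
          using prefix_lcp hp hq

theorem lcp_getD_ne : ∀ p q : List Bool, (lcp p q).length < p.length →
    (lcp p q).length < q.length →
    p.getD (lcp p q).length true ≠ q.getD (lcp p q).length true
  | [], _ => by simp
  | _ :: _, [] => by simp
  | a :: p, b :: q => by
    by_cases h : a = b
    · subst h
      simp only [lcp, eq_self_iff_true, if_true, List.length_cons, List.getD_cons_succ,
        Nat.add_lt_add_iff_right]
      exact lcp_getD_ne p q
    · intro _ _
      simpa [lcp, h] using h

theorem prefix_concat_iff {x l : List Bool} {a : Bool} :
    x <+: l ++ [a] ↔ x = l ++ [a] ∨ x <+: l := by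
  constructor
  · rintro ⟨s, hs⟩
    induction s using List.reverseRecOn with
    | nil => exact Or.inl (by simpa using hs)
    | append_singleton s' c _ =>
      refine Or.inr ⟨s', ?_⟩
      have := congrArg List.dropLast hs
      simpa [← List.append_assoc] using this
  · rintro (rfl | h)
    · exact List.prefix_refl _
    · exact h.trans ⟨[a], rfl⟩

/-- The list of addresses of internal vertices. -/
def vaddrs : PTree r → List (List Bool)
  | .leaf _ => []
  | .node l t => [] :: (l.vaddrs.map (false :: ·) ++ t.vaddrs.map (true :: ·))

theorem mem_vaddrs_of_isVertex : ∀ {A : PTree r} {p : List Bool},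
    A.IsVertex p → p ∈ A.vaddrs := by
  intro A
  induction A with
  | leaf i =>
    rintro p ⟨l, t, h⟩
    cases p <;> simp [subtreeAt] at h
  | node l t ihl iht =>
    rintro p ⟨l', t', h⟩
    cases p with
    | nil => simp [vaddrs]
    | cons b q =>
      simp only [subtreeAt] at h
      cases b
      · simp only [Bool.false_eq_true, if_false] at h
        simp only [vaddrs, List.mem_cons, List.mem_append, List.mem_map]
        exact Or.inr (Or.inl ⟨q, ihl ⟨_, _, h⟩, rfl⟩)
      · simp only [if_pos rfl] at h
        simp only [vaddrs, List.mem_cons, List.mem_append, List.mem_map]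
        exact Or.inr (Or.inr ⟨q, iht ⟨_, _, h⟩, rfl⟩)

noncomputable instance instFintypeEdge (A : PTree r) : Fintype A.Edge := by
  classical
  exact Fintype.ofFinset (A.vaddrs.toFinset.filter (fun p => A.IsEdge p))
    (by
      intro p
      simp only [Finset.mem_filter, List.mem_toFinset]
      exact ⟨fun h => h.2, fun h => ⟨mem_vaddrs_of_isVertex h.2, h⟩⟩)

theorem X_pow_dvd_iff' {σ : Type*} {s : σ} {n : ℕ} {φ : MvPolynomial σ ℂ} :
    X s ^ n ∣ φ ↔ ∀ m ∈ φ.support, n ≤ m s := by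
  classical
  constructor
  · rintro ⟨ψ, rfl⟩ m hm
    have h := MvPolynomial.mem_support_iff.1 hm
    rw [X_pow_eq_monomial, coeff_monomial_mul'] at h
    by_cases hle : Finsupp.single s n ≤ m
    · simpa using (Finsupp.single_le_iff).1 hle
    · exact absurd (if_neg hle) h
  · intro h
    rw [φ.as_sum]
    refine Finset.dvd_sum fun m hm => ?_
    rw [X_pow_eq_monomial]
    exact monomial_dvd_monomial.2
      ⟨Or.inr (Finsupp.single_le_iff.2 (h m hm)), one_dvd _⟩

variable (A : PTree r)

/-- the exponent of the monomial `x_A · ∏_{e on the path to q} ζ_e`. -/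
noncomputable def kap (q : List Bool) : A.Idx →₀ ℕ :=
  Finsupp.single (Sum.inr (Sum.inl ())) 1 +
    ∑ e : A.Edge, if e.1 <+: q then Finsupp.single (Sum.inr (Sum.inr e)) 1 else 0

variable {A}

theorem kap_apply_edge (q : List Bool) (e : A.Edge) :
    kap A q (Sum.inr (Sum.inr e)) = if e.1 <+: q then 1 else 0 := by
  classical
  rw [kap, Finsupp.add_apply, Finsupp.single_apply, if_neg (by simp), zero_add,
    Finsupp.finset_sum_apply]
  rw [Finset.sum_eq_single_of_mem e (Finset.mem_univ e)]
  · split_ifs with h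
    · rw [Finsupp.single_apply, if_pos rfl]
    · rfl
  · intro e' _ hne
    split_ifs with h
    · rw [Finsupp.single_apply, if_neg (by simpa using hne)]
    · rfl

theorem kap_apply_x (q : List Bool) :
    kap A q (Sum.inr (Sum.inl ())) = 1 := by
  classical
  rw [kap, Finsupp.add_apply, Finsupp.single_apply, if_pos rfl,
    Finsupp.finset_sum_apply, Finset.sum_eq_zero, add_zero]
  intro e _
  split_ifs with h
  · rw [Finsupp.single_apply, if_neg (by simp)]
  · rfl

theorem kap_ne {q₁ q₂ : List Bool} (h₂ : A.IsEdge q₂) (hnp : ¬ q₂ <+: q₁) :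
    kap A q₁ ≠ kap A q₂ := by
  intro h
  have h' := DFunLike.congr_fun h ((Sum.inr (Sum.inr ⟨q₂, h₂⟩)) : A.Idx)
  rw [kap_apply_edge, kap_apply_edge, if_neg hnp, if_pos (List.prefix_refl _)] at h'
  exact absurd h' (by norm_num)

theorem kap_concat {q : List Bool} {b : Bool} (h : A.IsEdge (q ++ [b])) :
    kap A (q ++ [b]) = kap A q + Finsupp.single (Sum.inr (Sum.inr (⟨q ++ [b], h⟩ : A.Edge))) 1 := by
  classical
  rw [kap, kap, add_assoc]
  congr 1
  have key : ∀ e : A.Edge,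
      (if e.1 <+: q ++ [b] then Finsupp.single (α := A.Idx) (Sum.inr (Sum.inr e)) 1 else 0) =
        (if e.1 <+: q then Finsupp.single (α := A.Idx) (Sum.inr (Sum.inr e)) 1 else 0) +
          (if e = ⟨q ++ [b], h⟩ then Finsupp.single (α := A.Idx) (Sum.inr (Sum.inr e)) 1 else 0) := by
    intro e
    by_cases he : e = ⟨q ++ [b], h⟩
    · subst he
      rw [if_pos (List.prefix_refl _), if_pos rfl,
        if_neg (fun hc => by simpa using hc.length_le), zero_add]
    · rw [if_neg he, add_zero]
      have : e.1 <+: q ++ [b] ↔ e.1 <+: q := by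
        rw [prefix_concat_iff]
        simp only [or_iff_right_iff_imp]
        intro hc
        exact absurd (Subtype.ext hc) he
      by_cases hp : e.1 <+: q
      · rw [if_pos (this.2 hp), if_pos hp]
      · rw [if_neg (fun hc => hp (this.1 hc)), if_neg hp]
  rw [Finset.sum_congr rfl (fun e _ => key e), Finset.sum_add_distrib,
    Finset.sum_ite_eq' Finset.univ (⟨q ++ [b], h⟩ : A.Edge)
      (fun e => Finsupp.single (α := A.Idx) (Sum.inr (Sum.inr e)) 1),
    if_pos (Finset.mem_univ _)]

variable (A)

/-- The explicit polynomial giving `z_i` in terms of the `A`-coordinates, where the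
leaf labeled `i` is at address `p` in `A`. -/
noncomputable def Qp (p : List Bool) : MvPolynomial A.Idx ℂ :=
  X (Sum.inl ()) +
    ∑ k ∈ (Finset.range p.length).filter (fun k => p.getD k true = false),
      monomial (kap A (p.take k)) 1

variable {A}

theorem Qp_concat (q : List Bool) (b : Bool) :
    Qp A (q ++ [b]) = Qp A q + if b = false then monomial (kap A q) 1 else 0 := by
  classical
  rw [Qp, Qp, add_assoc]
  congr 1
  have hlen : (q ++ [b]).length = q.length + 1 := by simp
  have hgetD : ∀ k < q.length, (q ++ [b]).getD k true = q.getD k true := fun k hk =>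
    List.getD_append _ _ _ _ hk
  have htake : ∀ k ≤ q.length, (q ++ [b]).take k = q.take k := fun k hk =>
    List.take_append_of_le_length hk
  have hgetL : (q ++ [b]).getD q.length true = b := by
    rw [List.getD_append_right _ _ _ _ le_rfl, Nat.sub_self]
    rfl
  have hfilter : (Finset.range (q ++ [b]).length).filter
        (fun k => (q ++ [b]).getD k true = false) =
      (if b = false then {q.length} else ∅) ∪
        (Finset.range q.length).filter (fun k => q.getD k true = false) := by
    rw [hlen, Finset.range_add_one, Finset.filter_insert]
    by_cases hb : b = false
    · rw [if_pos (by rw [hgetL]; exact hb), if_pos hb]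
      rw [Finset.insert_eq]
      congr 1
      exact Finset.filter_congr fun k hk => by
        rw [hgetD k (Finset.mem_range.1 hk)]
    · rw [if_neg (by rw [hgetL]; exact hb), if_neg hb, Finset.empty_union]
      exact Finset.filter_congr fun k hk => by
        rw [hgetD k (Finset.mem_range.1 hk)]
  rw [hfilter]
  by_cases hb : b = false
  · rw [if_pos hb, if_pos hb, Finset.union_comm, Finset.sum_union (by
      simp [Finset.disjoint_singleton_right])]
    congr 1
    · exact Finset.sum_congr rfl fun k hk => by
        rw [htake k (le_of_lt (Finset.mem_range.1 (Finset.mem_filter.1 hk).1))]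
    · rw [Finset.sum_singleton, htake q.length le_rfl, List.take_length]
  · rw [if_neg hb, if_neg hb, Finset.empty_union, add_zero]
    exact Finset.sum_congr rfl fun k hk => by
      rw [htake k (le_of_lt (Finset.mem_range.1 (Finset.mem_filter.1 hk).1))]

end PTree

namespace PTree

open MvPolynomial

variable {r : ℕ} {A : PTree r} {z : Fin r → ℂ}

theorem subtree_node_of_concat {q : List Bool} {b : Bool} {t : PTree r}
    (h : A.subtreeAt (q ++ [b]) = some t) :
    ∃ l t', A.subtreeAt q = some (.node l t') ∧ t = (if b then t' else l) := by
  rw [subtreeAt_append] at h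
  cases hs : A.subtreeAt q with
  | none => rw [hs] at h; simp at h
  | some u =>
    rw [hs] at h
    cases u with
    | leaf j => simp [subtreeAt] at h
    | node l t' =>
      refine ⟨l, t', rfl, ?_⟩
      simp only [Option.bind_some, subtreeAt, Option.some.injEq] at h
      cases b <;> simp_all [subtreeAt]

theorem subtreeAt_nil (A : PTree r) : A.subtreeAt [] = some A := by
  cases A <;> rfl

theorem xAt_eq {q : List Bool} {t : PTree r} (h : A.subtreeAt q = some t) :
    A.xAt z q = xval z t := by
  rw [xAt, h]

theorem eval_monomial_kap (hx : xval z A ≠ 0)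
    (hz : ∀ e : A.Edge, A.zetaAt z e.1 ≠ 0)
    {q : List Bool} (hq : A.IsVertex q) :
    eval (A.assign (A.psi z)) (monomial (kap A q) 1) = A.xAt z q := by
  induction q using List.reverseRecOn with
  | nil =>
    have hkap : kap A [] = Finsupp.single (Sum.inr (Sum.inl ())) 1 := by
      rw [kap, Finset.sum_eq_zero, add_zero]
      intro e _
      rw [if_neg]
      intro hc
      exact e.2.1 (List.prefix_nil.1 hc)
    rw [hkap]
    have h1 : (monomial (Finsupp.single (Sum.inr (Sum.inl ()) : A.Idx) 1) (1 : ℂ)) =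
        X (Sum.inr (Sum.inl ())) := rfl
    have h2 : A.xAt z [] = xval z A := xAt_eq (subtreeAt_nil A)
    rw [h1, eval_X, h2]
    rfl
  | append_singleton q b ih =>
    obtain ⟨tnode, hnode⟩ : ∃ tn, A.subtreeAt (q ++ [b]) = some tn := by
      obtain ⟨l', t', h'⟩ := hq
      exact ⟨_, h'⟩
    obtain ⟨l, t', hsub, -⟩ := subtree_node_of_concat hnode
    have hvq : A.IsVertex q := ⟨l, t', hsub⟩
    have he : A.IsEdge (q ++ [b]) := ⟨by simp, hq⟩
    have hz0 : A.zetaAt z (q ++ [b]) ≠ 0 := hz (⟨q ++ [b], he⟩ : A.Edge)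
    have hdrop : (q ++ [b]).dropLast = q := by simp
    have hxq : A.xAt z q ≠ 0 := by
      intro h0
      apply hz0
      rw [zetaAt, hdrop, h0, div_zero]
    rw [kap_concat he]
    have hmon : (monomial (kap A q +
          Finsupp.single (Sum.inr (Sum.inr (⟨q ++ [b], he⟩ : A.Edge)) : A.Idx) 1) (1 : ℂ)) =
        monomial (kap A q) 1 * X (Sum.inr (Sum.inr ⟨q ++ [b], he⟩)) := by
      rw [X, monomial_mul, mul_one]
    rw [hmon, map_mul, eval_X, ih hvq]
    have hassign : A.assign (A.psi z) (Sum.inr (Sum.inr (⟨q ++ [b], he⟩ : A.Edge))) =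
        A.zetaAt z (q ++ [b]) := rfl
    rw [hassign, zetaAt, hdrop, mul_comm, div_mul_cancel₀ _ hxq]

theorem eval_Qp (hx : xval z A ≠ 0)
    (hz : ∀ e : A.Edge, A.zetaAt z e.1 ≠ 0)
    {q : List Bool} {t : PTree r} (h : A.subtreeAt q = some t) :
    eval (A.assign (A.psi z)) (Qp A q) = z t.rightmost := by
  induction q using List.reverseRecOn generalizing t with
  | nil =>
    have ht : t = A := by
      rw [subtreeAt_nil A, Option.some.injEq] at h
      exact h.symm
    rw [ht]
    have hQ : Qp A [] = X (Sum.inl ()) := by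
      rw [Qp]
      simp
    rw [hQ, eval_X]
    rfl
  | append_singleton q b ih =>
    obtain ⟨l, t', hsub, htb⟩ := subtree_node_of_concat h
    have hQ := ih hsub
    rw [Qp_concat, map_add, hQ]
    cases b with
    | false =>
      have ht : t = l := by simpa using htb
      rw [ht, if_pos rfl, eval_monomial_kap hx hz ⟨l, t', hsub⟩, xAt_eq hsub]
      show z (t'.rightmost) + (z l.rightmost - z t'.rightmost) = z l.rightmost
      ring
    | true =>
      have ht : t = t' := by simpa using htb
      rw [ht, if_neg (by simp), map_zero, add_zero]
      rfl

theorem P_eq_Qp {A : PTree r} (P : Fin r → MvPolynomial A.Idx ℂ) (hPsiPhi : A.PsiPhiId P)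
    {i : Fin r} {p : List Bool} (hp : A.subtreeAt p = some (.leaf i)) :
    P i = Qp A p := by
  classical
  set g : MvPolynomial A.Idx ℂ :=
    X (Sum.inr (Sum.inl ())) * ∏ e : A.Edge, X (Sum.inr (Sum.inr e)) with hg
  have hgne : g ≠ 0 := by
    apply mul_ne_zero (X_ne_zero _)
    rw [Finset.prod_ne_zero_iff]
    exact fun e _ => X_ne_zero _
  have hfun : ∀ a : A.Idx → ℂ, eval a ((P i - Qp A p) * g) = eval a (0 : MvPolynomial A.Idx ℂ) := by
    intro a
    rw [map_zero, map_mul]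
    rcases eq_or_ne (eval a g) 0 with h0 | h0
    · rw [h0, mul_zero]
    · have hevalg : eval a g = a (Sum.inr (Sum.inl ())) * ∏ e : A.Edge, a (Sum.inr (Sum.inr e)) := by
        rw [hg, map_mul, eval_X, map_prod]
        simp only [eval_X]
      rw [hevalg] at h0
      have hx0 : a (Sum.inr (Sum.inl ())) ≠ 0 := left_ne_zero_of_mul h0
      have hprod : (∏ e : A.Edge, a (Sum.inr (Sum.inr e))) ≠ 0 := right_ne_zero_of_mul h0
      have he0 : ∀ e : A.Edge, a (Sum.inr (Sum.inr e)) ≠ 0 := by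
        intro e
        exact Finset.prod_ne_zero_iff.1 hprod e (Finset.mem_univ e)
      set w : ℂ × ℂ × (A.Edge → ℂ) :=
        (a (Sum.inl ()), a (Sum.inr (Sum.inl ())), fun e => a (Sum.inr (Sum.inr e))) with hw
      have haw : A.assign w = a := by
        funext x
        rcases x with _ | (_ | e) <;> rfl
      have hps := hPsiPhi w hx0 he0
      set zz := A.phiMap P w with hzz
      have hx' : xval zz A = w.2.1 := by
        have h' := congrArg (fun u : ℂ × ℂ × (A.Edge → ℂ) => u.2.1) hps
        simpa [psi] using h'
      have hxzz : xval zz A ≠ 0 := by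
        rw [hx']
        exact hx0
      have hzzz : ∀ e : A.Edge, A.zetaAt zz e.1 ≠ 0 := by
        intro e
        have h' := congrArg (fun u : ℂ × ℂ × (A.Edge → ℂ) => u.2.2 e) hps
        simp only [psi] at h'
        rw [show A.zetaAt zz e.1 = w.2.2 e from h']
        exact he0 e
      have hassign : A.assign (A.psi zz) = a := by rw [hps, haw]
      have h1 : eval a (Qp A p) = zz i := by
        rw [← hassign, eval_Qp hxzz hzzz hp]
        rfl
      have h2 : eval a (P i) = zz i := by
        rw [hzz, phiMap, haw]
      rw [map_sub, h1, h2, sub_self, zero_mul]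
  have hzero := MvPolynomial.funext hfun
  have hfac : P i - Qp A p = 0 := by
    rcases mul_eq_zero.1 hzero with h | h
    · exact h
    · exact absurd h hgne
  exact sub_eq_zero.1 hfac

end PTree

namespace PTree

open MvPolynomial

variable {r : ℕ}

theorem take_of_prefix {c p : List Bool} (hc : c <+: p) : p.take c.length = c := by
  obtain ⟨s, rfl⟩ := hc
  exact List.take_left

theorem coeff_Qp {A : PTree r} {p c : List Bool} {tp : PTree r}
    (hp : A.subtreeAt p = some tp) (hc : c <+: p) (hlt : c.length < p.length) :
    coeff (kap A c) (Qp A p) = if p.getD c.length true = false then 1 else 0 := by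
  classical
  rw [Qp, coeff_add]
  have h1 : coeff (kap A c) (X (Sum.inl ()) : MvPolynomial A.Idx ℂ) = 0 := by
    rw [coeff_X', if_neg]
    intro hEq
    have h2 := DFunLike.congr_fun hEq ((Sum.inr (Sum.inl ())) : A.Idx)
    rw [kap_apply_x, Finsupp.single_apply, if_neg (by simp)] at h2
    exact absurd h2 (by norm_num)
  rw [h1, zero_add, coeff_sum]
  have hcnep : c ≠ p := fun h => by rw [h] at hlt; exact lt_irrefl _ hlt
  have htc : p.take c.length = c := take_of_prefix hc
  have hterm : ∀ k ∈ (Finset.range p.length).filter (fun k => p.getD k true = false),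
      coeff (kap A c) (monomial (kap A (p.take k)) (1:ℂ)) = if k = c.length then 1 else 0 := by
    intro k hk
    have hkr : k < p.length := Finset.mem_range.1 (Finset.mem_filter.1 hk).1
    rw [coeff_monomial]
    by_cases hkc : k = c.length
    · rw [if_pos hkc, if_pos]
      rw [hkc, htc]
    · rw [if_neg hkc, if_neg]
      rcases lt_or_gt_of_ne hkc with hlt2 | hgt
      · have hce : A.IsEdge c := by
          refine ⟨fun h0 => by simp [h0] at hlt2, isVertex_of_prefix hp hc hcnep⟩
        apply kap_ne hce
        intro hpre
        have hlen := hpre.length_le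
        rw [List.length_take] at hlen
        omega
      · have htkp : p.take k ≠ p := by
          intro h0
          have := congrArg List.length h0
          rw [List.length_take] at this
          omega
        have hek : A.IsEdge (p.take k) := by
          refine ⟨?_, isVertex_of_prefix hp (List.take_prefix _ _) htkp⟩
          intro h0
          have := congrArg List.length h0
          rw [List.length_take] at this
          simp only [List.length_nil] at this
          omega
        refine Ne.symm (kap_ne hek ?_)
        intro hpre
        have hlen := hpre.length_le
        rw [List.length_take] at hlen
        omega
  rw [Finset.sum_congr rfl hterm, Finset.sum_ite_eq' _ c.length (fun _ => (1:ℂ))]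
  have hmem : c.length ∈ (Finset.range p.length).filter (fun k => p.getD k true = false) ↔
      p.getD c.length true = false := by
    simp only [Finset.mem_filter, Finset.mem_range]
    exact ⟨fun h => h.2, fun h => ⟨hlt, h⟩⟩
  by_cases hb : p.getD c.length true = false
  · rw [if_pos hb, if_pos (hmem.2 hb)]
  · rw [if_neg hb, if_neg (fun h => hb (hmem.1 h))]

theorem kap_take_exp {A : PTree r} {p c : List Bool} (hc : p.take c.length = c) {k : ℕ}
    (hLk : c.length ≤ k) {e : A.Edge} (he : e.1 <+: c) :
    kap A (p.take k) (Sum.inr (Sum.inr e)) = 1 := by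
  rw [kap_apply_edge, if_pos]
  have h1 : c <+: p.take k := by
    have h2 := List.take_prefix c.length (p.take k)
    rwa [List.take_take, min_eq_left hLk, hc] at h2
  exact he.trans h1

end PTree

open PTree MvPolynomial in
/-- Let `r ≥ 3`, `A ∈ 𝒯_r` and `e₀ ∈ E(A)`, and let `Φ_A` (with components the
polynomials `P i`) be the polynomial map inverting `Ψ_A`.  For all `i < j`, the
polynomial `(z_i − z_j) ∘ Φ_A = P i − P j` in the variables
`(z_A, x_A, (ζ_e)_{e∈E(A)})` is nonzero, and its `ζ_{e₀}`-adic order (the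
largest `n` with `ζ_{e₀}^n ∣ (P i − P j)`) equals `1` if both `i` and `j`
belong to `Leaf(e₀)`, and equals `0` otherwise. -/
theorem stmt_10 {r : ℕ} (hr : 3 ≤ r) (A : PTree r) (hA : A.IsTree)
    (e₀ : List Bool) (he₀ : A.IsEdge e₀)
    (P : Fin r → MvPolynomial A.Idx ℂ)
    (hPhiPsi : A.PhiPsiId P) (hPsiPhi : A.PsiPhiId P)
    (i j : Fin r) (hij : i < j) :
    P i - P j ≠ 0 ∧
      ∀ n : ℕ,
        (MvPolynomial.X (Sum.inr (Sum.inr ⟨e₀, he₀⟩)) : MvPolynomial A.Idx ℂ) ^ n ∣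
            (P i - P j) ↔
          n ≤ (if i ∈ A.leavesAt e₀ ∧ j ∈ A.leavesAt e₀ then 1 else 0) := by
  classical
  obtain ⟨p, hp⟩ := exists_addr_of_mem (mem_all hA i)
  obtain ⟨p', hp'⟩ := exists_addr_of_mem (mem_all hA j)
  have hnodup := hA.1
  have hPQ : P i = Qp A p := P_eq_Qp P hPsiPhi hp
  have hPQ' : P j = Qp A p' := P_eq_Qp P hPsiPhi hp'
  have hnep : p ≠ p' := by
    intro h
    rw [h, hp'] at hp
    have h2 : PTree.leaf j = PTree.leaf i := Option.some.inj hp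
    have : i = j := by cases h2; rfl
    exact absurd this hij.ne
  have hnpre : ∀ {q q' : List Bool} {a b : Fin r}, A.subtreeAt q = some (.leaf a) →
      A.subtreeAt q' = some (.leaf b) → q ≠ q' → ¬ q <+: q' := by
    rintro q q' a b h1 h2 hqq ⟨s, rfl⟩
    cases s with
    | nil => exact hqq (by simp)
    | cons x s' =>
      rw [subtreeAt_append, h1] at h2
      simp [subtreeAt] at h2
  set c := lcp p p' with hcdef
  have hcp : c <+: p := lcp_prefix_left p p'
  have hcp' : c <+: p' := lcp_prefix_right p p'
  have hL : c.length < p.length := by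
    refine lt_of_le_of_ne hcp.length_le (fun h => ?_)
    exact hnpre hp hp' hnep ((hcp.eq_of_length h) ▸ hcp')
  have hL' : c.length < p'.length := by
    refine lt_of_le_of_ne hcp'.length_le (fun h => ?_)
    exact hnpre hp' hp (Ne.symm hnep) ((hcp'.eq_of_length h) ▸ hcp)
  have hdiv : p.getD c.length true ≠ p'.getD c.length true := lcp_getD_ne p p' hL hL'
  have htakeL : p.take c.length = c := take_of_prefix hcp
  have htakeL' : p'.take c.length = c := take_of_prefix hcp'
  have hmemleaf : ∀ {q : List Bool} {a : Fin r}, A.subtreeAt q = some (.leaf a) →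
      (a ∈ A.leavesAt e₀ ↔ e₀ <+: q) := by
    intro q a hq
    obtain ⟨l₀, t₀, h₀⟩ := he₀.2
    have hla : A.leavesAt e₀ = (PTree.node l₀ t₀).leafLabels := by
      rw [leavesAt, h₀]
      rfl
    rw [hla]
    constructor
    · intro hmem
      obtain ⟨q₀, hq₀⟩ := exists_addr_of_mem hmem
      have h2 : A.subtreeAt (e₀ ++ q₀) = some (.leaf a) := by
        rw [subtreeAt_append, h₀]
        exact hq₀
      have h3 := addr_unique hnodup hq h2
      rw [h3]
      exact ⟨q₀, rfl⟩
    · rintro ⟨s, rfl⟩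
      rw [subtreeAt_append, h₀] at hq
      simp only [Option.bind_some] at hq
      exact labels_subtree hq (by simp [leafLabels])
  have hco : coeff (kap A c) (P i - P j) =
      (if p.getD c.length true = false then (1:ℂ) else 0) -
        (if p'.getD c.length true = false then 1 else 0) := by
    rw [hPQ, hPQ', coeff_sub, coeff_Qp hp hcp hL, coeff_Qp hp' hcp' hL']
  have hconz : coeff (kap A c) (P i - P j) ≠ 0 := by
    rw [hco]
    rcases Bool.eq_false_or_eq_true (p.getD c.length true) with hb | hb <;>
      rcases Bool.eq_false_or_eq_true (p'.getD c.length true) with hb' | hb'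
    · exact absurd (hb.trans hb'.symm) hdiv
    · rw [if_neg (show ¬(p.getD c.length true = false) from
        fun h => absurd (hb.symm.trans h) (by decide)), if_pos hb']
      norm_num
    · rw [if_pos hb, if_neg (show ¬(p'.getD c.length true = false) from
        fun h => absurd (hb'.symm.trans h) (by decide))]
      norm_num
    · exact absurd (hb.trans hb'.symm) hdiv
  have hsupp : kap A c ∈ (P i - P j).support := mem_support_iff.2 hconz
  have hne0 : P i - P j ≠ 0 := fun h => by rw [h] at hsupp; simp at hsupp
  refine ⟨hne0, fun n => ?_⟩
  by_cases hcase : i ∈ A.leavesAt e₀ ∧ j ∈ A.leavesAt e₀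
  · rw [if_pos hcase]
    have hec : e₀ <+: c := prefix_lcp ((hmemleaf hp).1 hcase.1) ((hmemleaf hp').1 hcase.2)
    -- the cancelled form of `P i - P j`
    have hsplit : P i - P j =
        (∑ k ∈ ((Finset.range p.length).filter (fun k => p.getD k true = false)).filter
            (fun k => ¬ k < c.length), monomial (kap A (p.take k)) (1:ℂ)) -
          (∑ k ∈ ((Finset.range p'.length).filter (fun k => p'.getD k true = false)).filter
            (fun k => ¬ k < c.length), monomial (kap A (p'.take k)) (1:ℂ)) := by
      rw [hPQ, hPQ', Qp, Qp]
      have hXX : ∀ S S' : MvPolynomial A.Idx ℂ,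
          (X (Sum.inl ()) + S) - (X (Sum.inl ()) + S') = S - S' := fun S S' => by ring
      rw [hXX]
      rw [← Finset.sum_filter_add_sum_filter_not
          ((Finset.range p.length).filter (fun k => p.getD k true = false))
          (fun k => k < c.length),
        ← Finset.sum_filter_add_sum_filter_not
          ((Finset.range p'.length).filter (fun k => p'.getD k true = false))
          (fun k => k < c.length)]
      have hsets : ((Finset.range p.length).filter (fun k => p.getD k true = false)).filter
            (fun k => k < c.length) =
          ((Finset.range p'.length).filter (fun k => p'.getD k true = false)).filter
            (fun k => k < c.length) := by
        ext k
        simp only [Finset.mem_filter, Finset.mem_range]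
        constructor
        · rintro ⟨⟨h1, h2⟩, h3⟩
          refine ⟨⟨lt_trans h3 hL', ?_⟩, h3⟩
          obtain ⟨s, hs⟩ := hcp
          obtain ⟨s', hs'⟩ := hcp'
          rw [← hs, List.getD_append _ _ _ _ h3] at h2
          rw [← hs', List.getD_append _ _ _ _ h3]
          exact h2
        · rintro ⟨⟨h1, h2⟩, h3⟩
          refine ⟨⟨lt_trans h3 hL, ?_⟩, h3⟩
          obtain ⟨s, hs⟩ := hcp
          obtain ⟨s', hs'⟩ := hcp'
          rw [← hs', List.getD_append _ _ _ _ h3] at h2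
          rw [← hs, List.getD_append _ _ _ _ h3]
          exact h2
      have hlow : ∑ k ∈ ((Finset.range p.length).filter (fun k => p.getD k true = false)).filter
            (fun k => k < c.length), monomial (kap A (p.take k)) (1:ℂ) =
          ∑ k ∈ ((Finset.range p'.length).filter (fun k => p'.getD k true = false)).filter
            (fun k => k < c.length), monomial (kap A (p'.take k)) (1:ℂ) := by
        rw [hsets]
        refine Finset.sum_congr rfl fun k hk => ?_
        have hk3 : k < c.length := (Finset.mem_filter.1 hk).2
        obtain ⟨s, hs⟩ := hcp
        obtain ⟨s', hs'⟩ := hcp'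
        rw [← hs, ← hs', List.take_append_of_le_length (le_of_lt hk3),
          List.take_append_of_le_length (le_of_lt hk3)]
      rw [hlow]
      ring
    have hf : ∀ m ∈ (P i - P j).support, m ((Sum.inr (Sum.inr ⟨e₀, he₀⟩)) : A.Idx) = 1 := by
      intro m hm
      have hcm : coeff m (P i - P j) ≠ 0 := mem_support_iff.1 hm
      rw [hsplit, coeff_sub, coeff_sum, coeff_sum] at hcm
      have hex : (∃ k ∈ ((Finset.range p.length).filter (fun k => p.getD k true = false)).filter
            (fun k => ¬ k < c.length), coeff m (monomial (kap A (p.take k)) (1:ℂ)) ≠ 0) ∨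
          (∃ k ∈ ((Finset.range p'.length).filter (fun k => p'.getD k true = false)).filter
            (fun k => ¬ k < c.length), coeff m (monomial (kap A (p'.take k)) (1:ℂ)) ≠ 0) := by
        by_contra hcon
        rw [not_or] at hcon
        obtain ⟨hc1, hc2⟩ := hcon
        have e1 := Finset.sum_eq_zero (fun k hk => by
          refine Classical.byContradiction fun hne => ?_
          exact hc1 ⟨k, hk, hne⟩)
        have e2 := Finset.sum_eq_zero (fun k hk => by
          refine Classical.byContradiction fun hne => ?_
          exact hc2 ⟨k, hk, hne⟩)
        rw [e1, e2, sub_zero] at hcm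
        exact hcm rfl
      rcases hex with ⟨k, hk, hknz⟩ | ⟨k, hk, hknz⟩
      · have hLk : c.length ≤ k := not_lt.1 (Finset.mem_filter.1 hk).2
        rw [coeff_monomial] at hknz
        have hkm : kap A (p.take k) = m := by
          by_contra hne
          rw [if_neg hne] at hknz
          exact hknz rfl
        rw [← hkm]
        exact kap_take_exp htakeL hLk hec
      · have hLk : c.length ≤ k := not_lt.1 (Finset.mem_filter.1 hk).2
        rw [coeff_monomial] at hknz
        have hkm : kap A (p'.take k) = m := by
          by_contra hne
          rw [if_neg hne] at hknz
          exact hknz rfl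
        rw [← hkm]
        exact kap_take_exp htakeL' hLk hec
    constructor
    · intro hdvd
      have h2 := X_pow_dvd_iff'.1 hdvd (kap A c) hsupp
      rwa [hf _ hsupp] at h2
    · intro hn
      exact X_pow_dvd_iff'.2 fun m hm => by rw [hf m hm]; exact hn
  · rw [if_neg hcase]
    have hec : ¬ e₀ <+: c := fun h =>
      hcase ⟨(hmemleaf hp).2 (h.trans hcp), (hmemleaf hp').2 (h.trans hcp')⟩
    constructor
    · intro hdvd
      have h2 := X_pow_dvd_iff'.1 hdvd (kap A c) hsupp
      rwa [kap_apply_edge, if_neg hec] at h2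
    · intro hn
      rw [Nat.le_zero.1 hn, pow_zero]
      exact one_dvd _
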